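/- Let q be a prime power and let n, t be integers with 1 < t < n. If there exists a t-Steiner system in the hyperbolic polar space D_n of rank n over F_q, then t = n − 1. -/

import Mathlib

open Module Finset

/-- The hyperbolic quadratic form `Q(x) = ∑_{i=1}^n x_i x_{n+i}` on `(F_q)^{2n}`. -/
def hypQ (F : Type*) [Field F] (n : ℕ) (x : Fin (2 * n) → F) : F :=
  ∑ i : Fin n, x ⟨i.1, by have := i.2; omega⟩ * x ⟨n + i.1, by have := i.2; omega⟩

/-- A subspace is totally isotropic for the hyperbolic quadratic form. -/
def HypIsotropic (F : Type*) [Field F] (n : ℕ)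
    (U : Submodule F (Fin (2 * n) → F)) : Prop :=
  ∀ u ∈ U, hypQ F n u = 0

/-- `Y` is a `t`-Steiner system in the hyperbolic polar space `D_n`: a set of
totally isotropic `n`-dimensional subspaces (generators) such that every totally
isotropic `t`-dimensional subspace lies in exactly one member of `Y`. -/
def HypSteiner (F : Type*) [Field F] (n t : ℕ)
    (Y : Set (Submodule F (Fin (2 * n) → F))) : Prop :=
  (∀ W ∈ Y, HypIsotropic F n W ∧ Module.finrank F ↥W = n) ∧
  ∀ T : Submodule F (Fin (2 * n) → F), HypIsotropic F n T →
    Module.finrank F ↥T = t → ∃! W, W ∈ Y ∧ T ≤ W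

namespace StHyp

variable {F : Type*} [Field F] {n : ℕ}

def ix1 {n : ℕ} (i : Fin n) : Fin (2 * n) := ⟨i.1, by have := i.2; omega⟩
def ix2 {n : ℕ} (i : Fin n) : Fin (2 * n) := ⟨n + i.1, by have := i.2; omega⟩

@[simp] lemma ix1_val {n : ℕ} (i : Fin n) : (ix1 i).1 = i.1 := rfl
@[simp] lemma ix2_val {n : ℕ} (i : Fin n) : (ix2 i).1 = n + i.1 := rfl

def hypQ' (F : Type*) [Field F] (n : ℕ) (x : Fin (2 * n) → F) : F :=
  ∑ i : Fin n, x (ix1 i) * x (ix2 i)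

def hypB (F : Type*) [Field F] (n : ℕ) : LinearMap.BilinForm F (Fin (2 * n) → F) :=
  LinearMap.mk₂ F (fun x y => ∑ i : Fin n, (x (ix1 i) * y (ix2 i) + x (ix2 i) * y (ix1 i)))
    (by intros; simp [add_mul]; rw [← Finset.sum_add_distrib]; apply Finset.sum_congr rfl; intros; ring)
    (by intros; simp [Finset.mul_sum]; apply Finset.sum_congr rfl; intros; ring)
    (by intros; simp [mul_add]; rw [← Finset.sum_add_distrib]; apply Finset.sum_congr rfl; intros; ring)
    (by intros; simp [Finset.mul_sum]; apply Finset.sum_congr rfl; intros; ring)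

lemma hypB_apply (x y : Fin (2 * n) → F) :
    hypB F n x y = ∑ i : Fin n, (x (ix1 i) * y (ix2 i) + x (ix2 i) * y (ix1 i)) := rfl

lemma hypQ_add (x y : Fin (2 * n) → F) :
    hypQ' F n (x + y) = hypQ' F n x + hypQ' F n y + hypB F n x y := by
  simp only [hypQ' , hypB_apply, Pi.add_apply]
  rw [← Finset.sum_add_distrib, ← Finset.sum_add_distrib]
  apply Finset.sum_congr rfl; intros; ring

lemma hypQ_smul (c : F) (x : Fin (2 * n) → F) : hypQ' F n (c • x) = c ^ 2 * hypQ' F n x := by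
  simp only [hypQ', Pi.smul_apply, smul_eq_mul, Finset.mul_sum]
  apply Finset.sum_congr rfl; intros; ring

lemma hypB_symm (x y : Fin (2 * n) → F) : hypB F n x y = hypB F n y x := by
  simp only [hypB_apply]; apply Finset.sum_congr rfl; intros; ring

lemma hypB_isRefl : (hypB F n).IsRefl := fun x y h => by rwa [hypB_symm]

lemma hypB_self (x : Fin (2 * n) → F) (hx : hypQ' F n x = 0) : hypB F n x x = 0 := by
  have h := hypQ_add x x
  have h2 : x + x = (2 : F) • x := by funext j; simp [Pi.smul_apply]; ring
  rw [h2, hypQ_smul, hx] at h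
  simpa [hx] using h.symm

lemma ix1_ne_ix2 (i j : Fin n) : ix1 i ≠ ix2 j := by
  intro h
  have := congrArg Fin.val h
  simp only [ix1_val, ix2_val] at this
  have := i.2; omega

lemma hypB_single2 (x : Fin (2 * n) → F) (i : Fin n) :
    hypB F n x (Pi.single (ix2 i) 1) = x (ix1 i) := by
  rw [hypB_apply]
  rw [Finset.sum_eq_single i]
  · have h1 : Pi.single (M := fun _ => F) (ix2 i) 1 (ix2 i) = 1 := Pi.single_eq_same _ _
    have h2 : Pi.single (M := fun _ => F) (ix2 i) 1 (ix1 i) = 0 :=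
      Pi.single_eq_of_ne (ix1_ne_ix2 i i) _
    rw [h1, h2]; ring
  · intro j _ hji
    have h1 : Pi.single (M := fun _ => F) (ix2 i) 1 (ix2 j) = 0 := by
      apply Pi.single_eq_of_ne; simp only [Fin.ext_iff, ix2_val, ne_eq]
      exact fun h => hji (Fin.ext (by omega))
    have h2 : Pi.single (M := fun _ => F) (ix2 i) 1 (ix1 j) = 0 :=
      Pi.single_eq_of_ne (ix1_ne_ix2 j i) _
    rw [h1, h2]; ring
  · simp

lemma hypB_single1 (x : Fin (2 * n) → F) (i : Fin n) :
    hypB F n x (Pi.single (ix1 i) 1) = x (ix2 i) := by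
  rw [hypB_apply]
  rw [Finset.sum_eq_single i]
  · have h1 : Pi.single (M := fun _ => F) (ix1 i) 1 (ix1 i) = 1 := Pi.single_eq_same _ _
    have h2 : Pi.single (M := fun _ => F) (ix1 i) 1 (ix2 i) = 0 :=
      Pi.single_eq_of_ne (Ne.symm (ix1_ne_ix2 i i)) _
    rw [h1, h2]; ring
  · intro j _ hji
    have h1 : Pi.single (M := fun _ => F) (ix1 i) 1 (ix1 j) = 0 := by
      apply Pi.single_eq_of_ne; simp only [Fin.ext_iff, ix1_val, ne_eq]
      exact fun h => hji (Fin.ext (by omega))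
    have h2 : Pi.single (M := fun _ => F) (ix1 i) 1 (ix2 j) = 0 :=
      Pi.single_eq_of_ne (Ne.symm (ix1_ne_ix2 i j)) _
    rw [h1, h2]; ring
  · simp

lemma hypB_nondeg : (hypB F n).Nondegenerate := by
  have hL : LinearMap.SeparatingLeft (hypB F n) := by
   intro x hx
   funext j
   rcases lt_or_ge j.1 n with h | h
   · have := hx (Pi.single (ix2 ⟨j.1, h⟩) 1)
     rw [hypB_single2] at this
     simpa [ix1] using this
   · have hj : n + (j.1 - n) < 2*n := by have := j.2; omega
     have := hx (Pi.single (ix1 ⟨j.1 - n, by have := j.2; omega⟩) 1)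
     rw [hypB_single1] at this
     have he : ix2 (⟨j.1 - n, by have := j.2; omega⟩ : Fin n) = j := Fin.ext (by simp [ix2]; omega)
     rwa [he] at this
  exact ⟨hL, fun x hx => hL x (fun y => by rw [hypB_symm]; exact hx y)⟩

lemma hypQ_eq' : hypQ F n = hypQ' F n := rfl

def perp (U : Submodule F (Fin (2 * n) → F)) : Submodule F (Fin (2 * n) → F) :=
  (hypB F n).orthogonal U

lemma mem_perp {U : Submodule F (Fin (2 * n) → F)} {x : Fin (2 * n) → F} :
    x ∈ perp U ↔ ∀ y ∈ U, hypB F n y x = 0 := Iff.rfl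

lemma finrank_perp (U : Submodule F (Fin (2 * n) → F)) :
    finrank F (perp U) = 2 * n - finrank F U := by
  rw [perp, LinearMap.BilinForm.finrank_orthogonal hypB_nondeg U,
    Module.finrank_fin_fun]

lemma perp_perp (U : Submodule F (Fin (2 * n) → F)) : perp (perp U) = U :=
  LinearMap.BilinForm.orthogonal_orthogonal hypB_nondeg hypB_isRefl U

lemma perp_sup {U W : Submodule F (Fin (2 * n) → F)} :
    perp (U ⊔ W) = perp U ⊓ perp W := by
  apply le_antisymm
  · exact le_inf (LinearMap.BilinForm.orthogonal_le le_sup_left)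
      (LinearMap.BilinForm.orthogonal_le le_sup_right)
  · rintro x ⟨hx1, hx2⟩ y hy
    rcases Submodule.mem_sup.mp hy with ⟨a, ha, b, hb, rfl⟩
    have : hypB F n (a + b) x = hypB F n a x + hypB F n b x := by
      simp [map_add, LinearMap.add_apply]
    rw [this, hx1 a ha, hx2 b hb, add_zero]

lemma mem_perp_span {s x : Fin (2 * n) → F} :
    x ∈ perp (Submodule.span F {s}) ↔ hypB F n s x = 0 := by
  constructor
  · intro h; exact h s (Submodule.mem_span_singleton_self s)
  · intro h y hy
    rcases Submodule.mem_span_singleton.mp hy with ⟨c, rfl⟩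
    show hypB F n (c • s) x = 0
    rw [map_smul, LinearMap.smul_apply, h, smul_zero]

lemma iso_pair {U : Submodule F (Fin (2 * n) → F)} (hU : HypIsotropic F n U)
    {u v : Fin (2 * n) → F} (hu : u ∈ U) (hv : v ∈ U) : hypB F n u v = 0 := by
  have h := hypQ_add u v
  have h1 := hU u hu
  have h2 := hU v hv
  have h3 := hU (u + v) (U.add_mem hu hv)
  rw [hypQ_eq'] at h1 h2 h3
  rw [h3, h1, h2] at h
  simpa using h.symm

lemma iso_le_perp {U : Submodule F (Fin (2 * n) → F)} (hU : HypIsotropic F n U) :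
    U ≤ perp U := fun x hx => fun y hy => iso_pair hU hy hx

lemma iso_of_le {U W : Submodule F (Fin (2 * n) → F)} (h : U ≤ W)
    (hW : HypIsotropic F n W) : HypIsotropic F n U := fun u hu => hW u (h hu)

lemma iso_finrank_le {U : Submodule F (Fin (2 * n) → F)} (hU : HypIsotropic F n U) :
    finrank F U ≤ n := by
  have h1 := Submodule.finrank_mono (iso_le_perp hU)
  rw [finrank_perp] at h1
  have h2 : finrank F U ≤ 2 * n := by
    have := Submodule.finrank_le (R := F) (M := Fin (2 * n) → F) U
    rwa [Module.finrank_fin_fun] at this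
  omega

lemma gen_perp {W : Submodule F (Fin (2 * n) → F)} (hW : HypIsotropic F n W)
    (hrk : finrank F W = n) : perp W = W := by
  refine (Submodule.eq_of_le_of_finrank_le (iso_le_perp hW) ?_).symm
  rw [finrank_perp, hrk]; omega

lemma finrank_sup_span {U : Submodule F (Fin (2 * n) → F)} {x : Fin (2 * n) → F}
    (hx : x ∉ U) : finrank F (U ⊔ Submodule.span F {x} : Submodule F (Fin (2 * n) → F))
      = finrank F U + 1 := by
  have hx0 : x ≠ 0 := fun h => hx (h ▸ U.zero_mem)
  have hinf : U ⊓ Submodule.span F {x} = ⊥ := by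
    rw [eq_bot_iff]
    rintro y ⟨hy1, hy2⟩
    rcases Submodule.mem_span_singleton.mp hy2 with ⟨c, rfl⟩
    rcases eq_or_ne c 0 with rfl | hc
    · simp
    · exact absurd (by simpa [smul_smul, inv_mul_cancel₀ hc] using U.smul_mem c⁻¹ hy1) hx
  have := Submodule.finrank_sup_add_finrank_inf_eq U (Submodule.span F {x})
  rw [hinf, finrank_bot, add_zero, finrank_span_singleton hx0] at this
  omega

lemma iso_sup_span {U : Submodule F (Fin (2 * n) → F)} {x : Fin (2 * n) → F}
    (hU : HypIsotropic F n U) (hQx : hypQ F n x = 0) (hxp : x ∈ perp U) :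
    HypIsotropic F n (U ⊔ Submodule.span F {x}) := by
  intro u hu
  rcases Submodule.mem_sup.mp hu with ⟨a, ha, b, hb, rfl⟩
  rcases Submodule.mem_span_singleton.mp hb with ⟨c, rfl⟩
  rw [hypQ_eq'] at hQx ⊢
  have hQa : hypQ' F n a = 0 := by have := hU a ha; rwa [hypQ_eq'] at this
  have hBax : hypB F n a (c • x) = c * hypB F n a x := by
    rw [map_smul, smul_eq_mul]
  have hBx : hypB F n a x = 0 := hxp a ha
  rw [hypQ_add, hypQ_smul, hQa, hQx, hBax, hBx]
  ring

lemma exists_submodule_finrank (k : ℕ) (M : Submodule F (Fin (2 * n) → F))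
    (hk : k ≤ finrank F M) : ∃ N ≤ M, finrank F N = k := by
  induction k with
  | zero => exact ⟨⊥, bot_le, finrank_bot F _⟩
  | succ k ih =>
    rcases ih (by omega) with ⟨N, hNM, hNk⟩
    have hne : ¬ M ≤ N := fun h => by
      have := Submodule.finrank_mono h; omega
    rcases SetLike.not_le_iff_exists.mp hne with ⟨x, hxM, hxN⟩
    refine ⟨N ⊔ Submodule.span F {x}, sup_le hNM ?_, ?_⟩
    · rwa [Submodule.span_singleton_le_iff_mem]
    · rw [finrank_sup_span hxN, hNk]

section Counting

open scoped Classical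

variable [Fintype F]

lemma natcard_sigma {ι : Type*} [Fintype ι] (G : ι → Type*) [∀ i, Fintype (G i)] :
    Nat.card (Σ i, G i) = ∑ i, Nat.card (G i) := by
  rw [Nat.card_eq_fintype_card, Fintype.card_sigma]
  exact Finset.sum_congr rfl (fun i _ => (Nat.card_eq_fintype_card).symm)

lemma card_ne_zero : Nat.card {a : F // a ≠ 0} + 1 = Nat.card F := by
  rw [← Nat.card_congr (unitsEquivNeZero (G₀ := F)), ← Nat.card_eq_card_units_add_one]

lemma card_compl_split (P : F × F → Prop) :
    Nat.card {p : F × F // P p} + Nat.card {p : F × F // ¬ P p} = Nat.card (F × F) := by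
  rw [← Nat.card_sum, Nat.card_congr (Equiv.sumCompl P)]

lemma card_pairs_ne {c : F} (hc : c ≠ 0) :
    Nat.card {p : F × F // p.1 * p.2 = c} + 1 = Nat.card F := by
  have e : {a : F // a ≠ 0} ≃ {p : F × F // p.1 * p.2 = c} :=
    { toFun := fun a => ⟨(a.1, a.1⁻¹ * c), by
        show a.1 * (a.1⁻¹ * c) = c
        rw [← mul_assoc, mul_inv_cancel₀ a.2, one_mul]⟩
      invFun := fun p => ⟨p.1.1, fun h0 => hc (by rw [← p.2, h0, zero_mul])⟩
      left_inv := fun a => rfl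
      right_inv := fun p => by
        have hp1 : p.1.1 ≠ 0 := fun h0 => hc (by rw [← p.2, h0, zero_mul])
        apply Subtype.ext
        apply Prod.ext
        · rfl
        · show p.1.1⁻¹ * c = p.1.2
          have h := p.2
          apply mul_left_cancel₀ hp1
          rw [← mul_assoc, mul_inv_cancel₀ hp1, one_mul, h] }
  rw [← Nat.card_congr e, card_ne_zero]

lemma card_pairs_zero :
    Nat.card {p : F × F // p.1 * p.2 = 0} + 1 = 2 * Nat.card F := by
  obtain ⟨r, hr⟩ : ∃ r, Nat.card F = r + 1 :=
    ⟨Nat.card F - 1, by have := Nat.card_pos (α := F); omega⟩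
  have e : {p : F × F // ¬ p.1 * p.2 = 0} ≃ {a : F // a ≠ 0} × {b : F // b ≠ 0} :=
    (Equiv.subtypeEquivRight (fun p => by simp [mul_eq_zero, not_or])).trans
      (Equiv.subtypeProdEquivProd)
  have h1 : Nat.card {a : F // a ≠ 0} = r := by have := card_ne_zero (F := F); omega
  have hB : Nat.card {p : F × F // ¬ p.1 * p.2 = 0} = r * r := by
    rw [Nat.card_congr e, Nat.card_prod, h1]
  have hsplit := card_compl_split (fun p : F × F => p.1 * p.2 = 0)
  have hFF : Nat.card (F × F) = (r+1) * (r+1) := by rw [Nat.card_prod, hr]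
  have hexp : (r+1) * (r+1) = r * r + 2 * r + 1 := by ring
  rw [hB, hFF] at hsplit
  rw [hr]
  generalize hm : r * r = m at hsplit hexp
  omega

lemma card_pairs (c : F) :
    Nat.card {p : F × F // p.1 * p.2 = c} + 1 =
      (if c = 0 then 2 * Nat.card F else Nat.card F) := by
  split_ifs with h
  · subst h; exact card_pairs_zero
  · exact card_pairs_ne h

lemma natcard_submodule {m : ℕ} (M : Submodule F (Fin m → F)) :
    Nat.card M = Nat.card F ^ finrank F M := by
  rw [Nat.card_eq_fintype_card, Nat.card_eq_fintype_card, card_eq_pow_finrank (K := F)]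

lemma card_dot_zero {m : ℕ} (a : Fin m → F) (ha : a ≠ 0) :
    Nat.card {b : Fin m → F // ∑ i, a i * b i = 0} = Nat.card F ^ (m - 1) := by
  let f : (Fin m → F) →ₗ[F] F :=
    { toFun := fun b => ∑ i, a i * b i
      map_add' := by intro b c; simp [mul_add, Finset.sum_add_distrib]
      map_smul' := by intro c b; simp [Finset.mul_sum]; apply Finset.sum_congr rfl; intros; ring }
  obtain ⟨i, hi⟩ : ∃ i, a i ≠ 0 := by
    by_contra hcon; push_neg at hcon; exact ha (funext hcon)
  have hsurj : Function.Surjective f := by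
    intro c
    refine ⟨Pi.single i ((a i)⁻¹ * c), ?_⟩
    simp only [f, LinearMap.coe_mk, AddHom.coe_mk]
    rw [Finset.sum_eq_single i]
    · rw [Pi.single_eq_same, ← mul_assoc, mul_inv_cancel₀ hi, one_mul]
    · intro j _ hj; rw [Pi.single_eq_of_ne hj, mul_zero]
    · simp
  have hrange : LinearMap.range f = ⊤ := LinearMap.range_eq_top.mpr hsurj
  have hrn := LinearMap.finrank_range_add_finrank_ker f
  rw [hrange, finrank_top, Module.finrank_self, Module.finrank_fin_fun] at hrn
  have hker : finrank F (LinearMap.ker f) = m - 1 := by omega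
  have e : {b : Fin m → F // ∑ i, a i * b i = 0} ≃ LinearMap.ker f :=
    Equiv.subtypeEquivRight (fun b => (LinearMap.mem_ker (f := f)).symm)
  rw [Nat.card_congr e, natcard_submodule, hker]

def splitEquiv (F : Type*) [Field F] (n : ℕ) :
    (Fin (2 * n) → F) ≃ (Fin n → F) × (Fin n → F) where
  toFun x := (fun i => x (ix1 i), fun i => x (ix2 i))
  invFun p := fun j =>
    if h : j.1 < n then p.1 ⟨j.1, h⟩ else p.2 ⟨j.1 - n, by have := j.2; omega⟩
  left_inv x := by
    funext j
    dsimp only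
    by_cases h : j.1 < n
    · rw [dif_pos h]
      exact congrArg x (Fin.ext rfl)
    · rw [dif_neg h]
      exact congrArg x (Fin.ext (by simp only [ix2_val]; have := j.2; omega))
  right_inv p := by
    apply Prod.ext
    · funext i
      have h : (ix1 i).1 < n := i.2
      show dite _ _ _ = _
      rw [dif_pos h]
      exact congrArg p.1 (Fin.ext rfl)
    · funext i
      have h : ¬ ((ix2 i).1 < n) := by simp only [ix2_val]; omega
      show dite _ _ _ = _
      rw [dif_neg h]
      exact congrArg p.2 (Fin.ext (by simp only [ix2_val]; omega))

lemma card_Q_zero (hn : 1 ≤ n) :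
    Nat.card {x : Fin (2 * n) → F // hypQ' F n x = 0} + Nat.card F ^ (n - 1)
      = Nat.card F ^ (2 * n - 1) + Nat.card F ^ n := by
  set q := Nat.card F with hqdef
  have hq : 1 ≤ q := Nat.card_pos
  have h1 : (q ^ n - 1) * q ^ (n - 1) + q ^ (n - 1) = q ^ n * q ^ (n - 1) := by
    rw [← add_one_mul, Nat.sub_add_cancel (Nat.one_le_pow _ _ hq)]
  have hnn : n + (n - 1) = 2 * n - 1 := by omega
  have h2 : q ^ n * q ^ (n - 1) = q ^ (2 * n - 1) := by rw [← pow_add, hnn]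
  have hfun : Nat.card (Fin n → F) = q ^ n := by
    rw [hqdef, Nat.card_eq_fintype_card, Nat.card_eq_fintype_card, Fintype.card_fun,
      Fintype.card_fin]
  have e1 : {x : Fin (2 * n) → F // hypQ' F n x = 0}
      ≃ {p : (Fin n → F) × (Fin n → F) // ∑ i, p.1 i * p.2 i = 0} :=
    (splitEquiv F n).subtypeEquiv (fun x => by rfl)
  have e2 : {p : (Fin n → F) × (Fin n → F) // ∑ i, p.1 i * p.2 i = 0}
      ≃ Σ a : Fin n → F, {b : Fin n → F // ∑ i, a i * b i = 0} :=
    Equiv.subtypeProdEquivSigmaSubtype (fun (a b : Fin n → F) => ∑ i, a i * b i = 0)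
  rw [Nat.card_congr (e1.trans e2), natcard_sigma]
  rw [← Finset.add_sum_erase Finset.univ _ (Finset.mem_univ (0 : Fin n → F))]
  have hzero : Nat.card {b : Fin n → F // ∑ i, (0 : Fin n → F) i * b i = 0} = q ^ n := by
    rw [Nat.card_congr (Equiv.subtypeUnivEquiv (fun b => by simp))]
    exact hfun
  have herase : ∀ a ∈ Finset.univ.erase (0 : Fin n → F),
      Nat.card {b : Fin n → F // ∑ i, a i * b i = 0} = q ^ (n - 1) := by
    intro a ha
    exact card_dot_zero a (Finset.mem_erase.mp ha).1
  rw [hzero, Finset.sum_congr rfl herase, Finset.sum_const,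
    Finset.card_erase_of_mem (Finset.mem_univ _), Finset.card_univ, smul_eq_mul]
  rw [Nat.card_eq_fintype_card] at hfun
  rw [hfun]
  linarith [h1, h2]

lemma zcount (hn : 1 ≤ n) :
    ∀ (s : ℕ) (S : Submodule F (Fin (2 * n) → F)), HypIsotropic F n S → finrank F S = s →
    Nat.card {x : Fin (2 * n) → F // x ∈ perp S ∧ hypQ' F n x = 0} + Nat.card F ^ (n - 1)
      = Nat.card F ^ (2 * n - 1 - s) + Nat.card F ^ n := by
  intro s
  induction s with
  | zero =>
    intro S hSiso hS0
    have hSbot : S = ⊥ := Submodule.finrank_eq_zero.mp hS0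
    subst hSbot
    have hpb : perp (⊥ : Submodule F (Fin (2 * n) → F)) = ⊤ :=
      LinearMap.BilinForm.orthogonal_bot
    have e : {x : Fin (2 * n) → F // x ∈ perp (⊥ : Submodule F (Fin (2 * n) → F))
        ∧ hypQ' F n x = 0} ≃ {x : Fin (2 * n) → F // hypQ' F n x = 0} :=
      Equiv.subtypeEquivRight (fun x => by rw [hpb]; simp)
    rw [Nat.card_congr e, Nat.sub_zero]
    exact card_Q_zero hn
  | succ s ih =>
    intro S hSiso hrk
    set q := Nat.card F with hqdef
    have hq : 1 ≤ q := Nat.card_pos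
    obtain ⟨S', hS'le, hS'rk⟩ := exists_submodule_finrank s S (by omega)
    have hnotle : ¬ S ≤ S' := fun hle => by have := Submodule.finrank_mono hle; omega
    obtain ⟨s₁, hs₁S, hs₁S'⟩ := SetLike.not_le_iff_exists.mp hnotle
    have hSeq : S' ⊔ Submodule.span F {s₁} = S := by
      apply Submodule.eq_of_le_of_finrank_le
        (sup_le hS'le (by rwa [Submodule.span_singleton_le_iff_mem]))
      rw [finrank_sup_span hs₁S', hS'rk, hrk]
    have hS'iso : HypIsotropic F n S' := iso_of_le hS'le hSiso
    have hQs₁ : hypQ' F n s₁ = 0 := by have := hSiso s₁ hs₁S; rwa [hypQ_eq'] at this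
    have hs₁P : s₁ ∈ perp S' := fun y hy => iso_pair hSiso (hS'le hy) hs₁S
    have hex : ∃ y ∈ perp S', hypB F n s₁ y ≠ 0 := by
      by_contra hcon
      push_neg at hcon
      apply hs₁S'
      have hmem : s₁ ∈ perp (perp S') := fun y hy => by
        rw [hypB_symm]; exact hcon y hy
      rwa [perp_perp] at hmem
    obtain ⟨y, hyP, hBy⟩ := hex
    have hBss : hypB F n s₁ s₁ = 0 := hypB_self s₁ hQs₁
    obtain ⟨f', hf'P, hBsf', hQf'⟩ :
        ∃ f', f' ∈ perp S' ∧ hypB F n s₁ f' = 1 ∧ hypQ' F n f' = 0 := by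
      have key : ∀ v : Fin (2 * n) → F, v ∈ perp S' → hypB F n v s₁ = 1 →
          ∃ f', f' ∈ perp S' ∧ hypB F n s₁ f' = 1 ∧ hypQ' F n f' = 0 := by
        intro v hvP hBvs
        refine ⟨v - hypQ' F n v • s₁,
          Submodule.sub_mem _ hvP (Submodule.smul_mem _ _ hs₁P), ?_, ?_⟩
        · simp only [map_sub, map_smul, smul_eq_mul]
          rw [hBss, hypB_symm s₁ v, hBvs]
          ring
        · have hBt : hypB F n v ((-(hypQ' F n v)) • s₁) = -(hypQ' F n v) := by
            rw [map_smul, smul_eq_mul, hBvs]; ring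
          rw [sub_eq_add_neg, ← neg_smul, hypQ_add, hypQ_smul (-(hypQ' F n v)) s₁,
            hQs₁, hBt]
          ring
      apply key ((hypB F n s₁ y)⁻¹ • y) (Submodule.smul_mem _ _ hyP)
      have : hypB F n ((hypB F n s₁ y)⁻¹ • y) s₁
          = (hypB F n s₁ y)⁻¹ * hypB F n y s₁ := by
        rw [map_smul, LinearMap.smul_apply, smul_eq_mul]
      rw [this, hypB_symm y s₁, inv_mul_cancel₀ hBy]
    have hBf's : hypB F n f' s₁ = 1 := by rw [hypB_symm]; exact hBsf'
    have hBf'f' : hypB F n f' f' = 0 := hypB_self f' hQf'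
    have hf'notS : f' ∉ S := fun hf'S => by
      have h0 : hypB F n s₁ f' = 0 := iso_pair hSiso hs₁S hf'S
      rw [hBsf'] at h0; exact one_ne_zero h0
    set E := S ⊔ Submodule.span F {f'} with hEdef
    have hErk : finrank F E = s + 2 := by
      rw [hEdef, finrank_sup_span hf'notS, hrk]
    set U := perp E with hUdef
    have hUrk : finrank F U = 2 * n - (s + 2) := by rw [hUdef, finrank_perp, hErk]
    have hperpE : U = (perp S' ⊓ perp (Submodule.span F {s₁})) ⊓ perp (Submodule.span F {f'}) := by
      rw [hUdef, hEdef, ← hSeq, perp_sup, perp_sup]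
    have hUsub : ∀ u ∈ U, u ∈ perp S' ∧ hypB F n s₁ u = 0 ∧ hypB F n f' u = 0 := by
      intro u hu
      rw [hperpE] at hu
      obtain ⟨⟨h1, h2⟩, h3⟩ := hu
      exact ⟨h1, mem_perp_span.mp h2, mem_perp_span.mp h3⟩
    have hUof : ∀ u, u ∈ perp S' → hypB F n s₁ u = 0 → hypB F n f' u = 0 → u ∈ U := by
      intro u h1 h2 h3
      rw [hperpE]
      exact ⟨⟨h1, mem_perp_span.mpr h2⟩, mem_perp_span.mpr h3⟩
    -- perp S as intersection
    have hperpS : perp S = perp S' ⊓ perp (Submodule.span F {s₁}) := by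
      rw [← hSeq, perp_sup]
    -- Q of combinations
    have hQcomb : ∀ (u : Fin (2 * n) → F), hypB F n s₁ u = 0 → hypB F n f' u = 0 →
        ∀ α β : F, hypQ' F n (u + α • s₁ + β • f') = hypQ' F n u + α * β := by
      intro u hu1 hu2 α β
      have hBus : hypB F n u s₁ = 0 := by rw [hypB_symm]; exact hu1
      have hBuf : hypB F n u f' = 0 := by rw [hypB_symm]; exact hu2
      rw [add_assoc, hypQ_add, hypQ_add, hypQ_smul, hypQ_smul, hQs₁, hQf']
      simp only [map_add, map_smul, LinearMap.add_apply, LinearMap.smul_apply, smul_eq_mul]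
      rw [hBsf', hBus, hBuf]
      ring
    -- coordinates
    have hcoordβ : ∀ (u : Fin (2 * n) → F), hypB F n s₁ u = 0 →
        ∀ α β : F, hypB F n s₁ (u + α • s₁ + β • f') = β := by
      intro u hu α β
      simp only [map_add, map_smul, smul_eq_mul]
      rw [hu, hBss, hBsf']; ring
    have hcoordα : ∀ (u : Fin (2 * n) → F), hypB F n f' u = 0 →
        ∀ α β : F, hypB F n f' (u + α • s₁ + β • f') = α := by
      intro u hu α β
      simp only [map_add, map_smul, smul_eq_mul]
      rw [hu, hBf's, hBf'f']; ring
    have hs₁U : hypB F n s₁ s₁ = 0 := hBss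
    -- the bijection for perp S'
    have cardAT : Nat.card {x : Fin (2 * n) → F // x ∈ perp S' ∧ hypQ' F n x = 0}
        = Nat.card {p : ↥U × F × F //
            hypQ' F n (p.1 : Fin (2 * n) → F) + p.2.1 * p.2.2 = 0} := by
      apply Nat.card_congr
      refine Equiv.symm (Equiv.ofBijective (fun p =>
        ⟨(p.1.1 : Fin (2 * n) → F) + p.1.2.1 • s₁ + p.1.2.2 • f',
          Submodule.add_mem _ (Submodule.add_mem _ (hUsub _ p.1.1.2).1
            (Submodule.smul_mem _ _ hs₁P)) (Submodule.smul_mem _ _ hf'P),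
          by rw [hQcomb _ (hUsub _ p.1.1.2).2.1 (hUsub _ p.1.1.2).2.2]; exact p.2⟩) ⟨?_, ?_⟩)
      · -- injective
        rintro ⟨⟨u, α, β⟩, hp⟩ ⟨⟨u', α', β'⟩, hp'⟩ heq
        have hval : (u : Fin (2 * n) → F) + α • s₁ + β • f'
            = (u' : Fin (2 * n) → F) + α' • s₁ + β' • f' := congrArg Subtype.val heq
        have hβ : β = β' := by
          have h1 := hcoordβ u (hUsub _ u.2).2.1 α β
          have h2 := hcoordβ u' (hUsub _ u'.2).2.1 α' β'
          rw [← h1, ← h2, hval]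
        have hα : α = α' := by
          have h1 := hcoordα u (hUsub _ u.2).2.2 α β
          have h2 := hcoordα u' (hUsub _ u'.2).2.2 α' β'
          rw [← h1, ← h2, hval]
        have hu : (u : Fin (2 * n) → F) = u' := by
          subst hβ; subst hα
          exact add_right_cancel (add_right_cancel hval)
        apply Subtype.ext
        apply Prod.ext
        · exact Subtype.ext hu
        · exact Prod.ext hα hβ
      · -- surjective
        rintro ⟨x, hxP, hxQ⟩
        set α := hypB F n f' x with hα
        set β := hypB F n s₁ x with hβ
        set u := x - α • s₁ - β • f' with hu
        have hxu : x = u + α • s₁ + β • f' := by rw [hu]; module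
        have hBs₁u : hypB F n s₁ u = 0 := by
          rw [hu]
          simp only [map_sub, map_smul, smul_eq_mul]
          rw [hBss, hBsf', ← hβ]; ring
        have hBf'u : hypB F n f' u = 0 := by
          rw [hu]
          simp only [map_sub, map_smul, smul_eq_mul]
          rw [hBf's, hBf'f', ← hα]; ring
        have huP : u ∈ perp S' := by
          rw [hu]
          exact Submodule.sub_mem _ (Submodule.sub_mem _ hxP
            (Submodule.smul_mem _ _ hs₁P)) (Submodule.smul_mem _ _ hf'P)
        have huU : u ∈ U := hUof u huP hBs₁u hBf'u
        have hQu : hypQ' F n u + α * β = 0 := by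
          rw [← hQcomb u hBs₁u hBf'u α β, ← hxu]
          exact hxQ
        exact ⟨⟨(⟨u, huU⟩, α, β), hQu⟩, by apply Subtype.ext; exact hxu.symm⟩
    -- helpers for the rank-1 extension count
    have hQlin : ∀ u : Fin (2 * n) → F, hypB F n s₁ u = 0 → ∀ α : F,
        hypQ' F n (u + α • s₁) = hypQ' F n u := by
      intro u hu α
      have hBus : hypB F n u s₁ = 0 := by rw [hypB_symm]; exact hu
      rw [hypQ_add, hypQ_smul, hQs₁, map_smul, smul_eq_mul, hBus]
      ring
    have hc2 : ∀ u : Fin (2 * n) → F, hypB F n f' u = 0 → ∀ α : F,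
        hypB F n f' (u + α • s₁) = α := by
      intro u hu α
      simp only [map_add, map_smul, smul_eq_mul]
      rw [hu, hBf's]; ring
    set cU := Nat.card ↥U with hcU
    set ZU := Nat.card {u : ↥U // hypQ' F n (u : Fin (2 * n) → F) = 0} with hZU
    have inner : ∀ u : ↥U,
        Nat.card {cd : F × F // hypQ' F n (u : Fin (2 * n) → F) + cd.1 * cd.2 = 0} + 1
          = if hypQ' F n (u : Fin (2 * n) → F) = 0 then 2 * q else q := by
      intro u
      have e2 : {cd : F × F // hypQ' F n (u : Fin (2 * n) → F) + cd.1 * cd.2 = 0}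
          ≃ {cd : F × F // cd.1 * cd.2 = -(hypQ' F n (u : Fin (2 * n) → F))} :=
        Equiv.subtypeEquivRight (fun cd => by rw [add_comm, add_eq_zero_iff_eq_neg])
      rw [Nat.card_congr e2, card_pairs]
      simp only [neg_eq_zero]
      rfl
    have hsplit : ∀ u : ↥U, (if hypQ' F n (u : Fin (2 * n) → F) = 0 then 2 * q else q)
        = (if hypQ' F n (u : Fin (2 * n) → F) = 0 then q else 0) + q := fun u => by
      split_ifs <;> ring
    have hfilter : (Finset.univ.filter
        (fun u : ↥U => hypQ' F n (u : Fin (2 * n) → F) = 0)).card = ZU := by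
      rw [hZU, Nat.card_eq_fintype_card, Fintype.card_subtype]
    have hsum : Nat.card {p : ↥U × F × F //
        hypQ' F n (p.1 : Fin (2 * n) → F) + p.2.1 * p.2.2 = 0} + cU = q * ZU + q * cU := by
      calc Nat.card {p : ↥U × F × F //
            hypQ' F n (p.1 : Fin (2 * n) → F) + p.2.1 * p.2.2 = 0} + cU
          = (∑ u : ↥U, Nat.card {cd : F × F //
              hypQ' F n (u : Fin (2 * n) → F) + cd.1 * cd.2 = 0}) + cU := by
            rw [Nat.card_congr (Equiv.subtypeProdEquivSigmaSubtype
              (fun (u : ↥U) (cd : F × F) =>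
                hypQ' F n (u : Fin (2 * n) → F) + cd.1 * cd.2 = 0)), natcard_sigma]
        _ = ∑ u : ↥U, (Nat.card {cd : F × F //
              hypQ' F n (u : Fin (2 * n) → F) + cd.1 * cd.2 = 0} + 1) := by
            rw [Finset.sum_add_distrib, Finset.sum_const, smul_eq_mul, mul_one,
              Finset.card_univ, ← Nat.card_eq_fintype_card, ← hcU]
        _ = ∑ u : ↥U, ((if hypQ' F n (u : Fin (2 * n) → F) = 0 then q else 0) + q) :=
            Finset.sum_congr rfl (fun u _ => (inner u).trans (hsplit u))
        _ = q * ZU + q * cU := by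
            rw [Finset.sum_add_distrib, ← Finset.sum_filter, Finset.sum_const,
              Finset.sum_const, smul_eq_mul, smul_eq_mul, hfilter, Finset.card_univ,
              ← Nat.card_eq_fintype_card, ← hcU]
            ring
    have cardZS : Nat.card {x : Fin (2 * n) → F // x ∈ perp S ∧ hypQ' F n x = 0}
        = q * ZU := by
      have e : {p : ↥U × F // hypQ' F n (p.1 : Fin (2 * n) → F) = 0}
          ≃ {x : Fin (2 * n) → F // x ∈ perp S ∧ hypQ' F n x = 0} := by
        refine Equiv.ofBijective (fun p => ⟨(p.1.1 : Fin (2 * n) → F) + p.1.2 • s₁,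
          ?_, ?_⟩) ⟨?_, ?_⟩
        · rw [hperpS]
          refine ⟨Submodule.add_mem _ (hUsub _ p.1.1.2).1 (Submodule.smul_mem _ _ hs₁P), ?_⟩
          apply mem_perp_span.mpr
          simp only [map_add, map_smul, smul_eq_mul]
          rw [(hUsub _ p.1.1.2).2.1, hBss]; ring
        · rw [hQlin _ (hUsub _ p.1.1.2).2.1]
          exact p.2
        · rintro ⟨⟨u, α⟩, hp⟩ ⟨⟨u', α'⟩, hp'⟩ heq
          have hval : (u : Fin (2 * n) → F) + α • s₁ = (u' : Fin (2 * n) → F) + α' • s₁ :=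
            congrArg Subtype.val heq
          have hα : α = α' := by
            have h1 := hc2 u (hUsub _ u.2).2.2 α
            have h2 := hc2 u' (hUsub _ u'.2).2.2 α'
            rw [← h1, ← h2, hval]
          subst hα
          have hu : (u : Fin (2 * n) → F) = u' := add_right_cancel hval
          apply Subtype.ext
          apply Prod.ext
          · exact Subtype.ext hu
          · rfl
        · rintro ⟨x, hxP, hxQ⟩
          rw [hperpS] at hxP
          obtain ⟨hxP', hxs⟩ := hxP
          have hBs₁x : hypB F n s₁ x = 0 := mem_perp_span.mp hxs
          set α := hypB F n f' x with hαdef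
          set u := x - α • s₁ with hudef
          have hxu : x = u + α • s₁ := by rw [hudef]; module
          have hBs₁u : hypB F n s₁ u = 0 := by
            rw [hudef]
            simp only [map_sub, map_smul, smul_eq_mul]
            rw [hBs₁x, hBss]; ring
          have hBf'u : hypB F n f' u = 0 := by
            rw [hudef]
            simp only [map_sub, map_smul, smul_eq_mul]
            rw [hBf's, ← hαdef]; ring
          have huP : u ∈ perp S' := by
            rw [hudef]
            exact Submodule.sub_mem _ hxP' (Submodule.smul_mem _ _ hs₁P)
          have huU : u ∈ U := hUof u huP hBs₁u hBf'u
          have hQu : hypQ' F n u = 0 := by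
            rw [← hQlin u hBs₁u α, ← hxu]; exact hxQ
          exact ⟨⟨(⟨u, huU⟩, α), hQu⟩, by apply Subtype.ext; exact hxu.symm⟩
      have e2 : {p : ↥U × F // hypQ' F n (p.1 : Fin (2 * n) → F) = 0}
          ≃ {u : ↥U // hypQ' F n (u : Fin (2 * n) → F) = 0} × F :=
        { toFun := fun p => (⟨p.1.1, p.2⟩, p.1.2)
          invFun := fun w => ⟨(w.1.1, w.2), w.1.2⟩
          left_inv := fun p => rfl
          right_inv := fun w => rfl }
      rw [← Nat.card_congr e, Nat.card_congr e2, Nat.card_prod, ← hZU, ← hqdef, mul_comm]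
    -- final assembly
    have hsn : s + 1 ≤ n := by
      have := iso_finrank_le hSiso; omega
    have ihA := ih S' hS'iso hS'rk
    rw [cardAT] at ihA
    have hcUval : cU = q ^ (2 * n - (s + 2)) := by rw [hcU, natcard_submodule, hUrk]
    have hexp1 : q ^ (2 * n - 1 - s) = q ^ (2 * n - (s + 2)) * q := by
      have h : 2 * n - 1 - s = (2 * n - (s + 2)) + 1 := by omega
      rw [h, pow_succ]
    have hexp2 : 2 * n - 1 - (s + 1) = 2 * n - (s + 2) := by omega
    rw [cardZS, hexp2]
    rw [hcUval] at hsum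
    rw [hexp1] at ihA
    linarith only [hsum, ihA]

end Counting

section Main

open scoped Classical

variable [Fintype F]

/-- coordinate-vanishing submodule: x j = 0 for all j with n ≤ j -/
def lowZ (F : Type*) [Field F] (n : ℕ) : Submodule F (Fin (2 * n) → F) where
  carrier := {x | ∀ j : Fin (2 * n), n ≤ j.1 → x j = 0}
  add_mem' hx hy j hj := by simp [hx j hj, hy j hj]
  zero_mem' := fun j _ => rfl
  smul_mem' c x hx j hj := by simp [hx j hj]

lemma exists_iso_t (t : ℕ) (ht : t ≤ n) :
    ∃ T : Submodule F (Fin (2 * n) → F), HypIsotropic F n T ∧ finrank F T = t := by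
  let v : Fin t → (Fin (2 * n) → F) := fun i => Pi.single (ix1 ⟨i.1, lt_of_lt_of_le i.2 ht⟩) 1
  have hv : v = (⇑(Pi.basisFun F (Fin (2 * n)))) ∘
      (fun i : Fin t => ix1 ⟨i.1, lt_of_lt_of_le i.2 ht⟩) := by
    funext i
    simp [v, Pi.basisFun_apply]
  have hinj : Function.Injective (fun i : Fin t => ix1 ⟨i.1, lt_of_lt_of_le i.2 ht⟩) := by
    intro i j hij
    have := congrArg Fin.val hij
    simp only [ix1_val] at this
    exact Fin.ext this
  have hli : LinearIndependent F v := by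
    rw [hv]
    exact (Pi.basisFun F (Fin (2 * n))).linearIndependent.comp _ hinj
  refine ⟨Submodule.span F (Set.range v), ?_, ?_⟩
  · have hle : Submodule.span F (Set.range v) ≤ lowZ F n := by
      rw [Submodule.span_le]
      rintro _ ⟨i, rfl⟩
      intro j hj
      apply Pi.single_eq_of_ne
      intro hje
      have := congrArg Fin.val hje
      simp only [ix1_val] at this
      have hi := (⟨i.1, lt_of_lt_of_le i.2 ht⟩ : Fin n).2
      omega
    intro x hx
    rw [hypQ_eq']
    apply Finset.sum_eq_zero
    intro i _
    have h2 : x (ix2 i) = 0 := hle hx (ix2 i) (by simp only [ix2_val]; omega)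
    rw [h2, mul_zero]
  · rw [finrank_span_eq_card hli, Fintype.card_fin]

lemma card_filter_mem (A : Submodule F (Fin (2 * n) → F)) :
    (Finset.univ.filter (fun x : Fin (2 * n) → F => x ∈ A)).card = Nat.card ↥A := by
  rw [Nat.card_eq_fintype_card, Fintype.card_subtype]

lemma card_filter_sub {A B : Submodule F (Fin (2 * n) → F)} (h : B ≤ A) :
    (Finset.univ.filter (fun x : Fin (2 * n) → F => x ∈ A ∧ x ∉ B)).card
      + Nat.card ↥B = Nat.card ↥A := by
  have hset : Finset.univ.filter (fun x : Fin (2 * n) → F => x ∈ A ∧ x ∉ B)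
      = (Finset.univ.filter (fun x : Fin (2 * n) → F => x ∈ A))
        \ (Finset.univ.filter (fun x : Fin (2 * n) → F => x ∈ B)) := by
    ext x
    simp only [Finset.mem_filter, Finset.mem_univ, true_and, Finset.mem_sdiff]
  have hsub : (Finset.univ.filter (fun x : Fin (2 * n) → F => x ∈ B))
      ⊆ (Finset.univ.filter (fun x : Fin (2 * n) → F => x ∈ A)) := by
    intro x hx
    simp only [Finset.mem_filter, Finset.mem_univ, true_and] at hx ⊢
    exact h hx
  rw [hset, ← card_filter_mem B, ← card_filter_mem A,
    Finset.card_sdiff_add_card_eq_card hsub]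

lemma not_steiner {t : ℕ} (ht1 : 1 < t) (htn : t < n) (hne : t ≠ n - 1)
    (Y : Set (Submodule F (Fin (2 * n) → F))) (hst : HypSteiner F n t Y) : False := by
  obtain ⟨hst1, hst2⟩ := hst
  have hn1 : 1 ≤ n := by omega
  have htn2 : t + 2 ≤ n := by omega
  set q := Nat.card F with hqdef
  have hq2 : 2 ≤ q := by rw [hqdef, Nat.card_eq_fintype_card]; exact Fintype.one_lt_card
  -- get a generator W
  obtain ⟨T0, hT0iso, hT0rk⟩ := exists_iso_t (F := F) (n := n) t (by omega)
  obtain ⟨W, ⟨hWY, hT0W⟩, -⟩ := hst2 T0 hT0iso hT0rk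
  obtain ⟨hWiso, hWrk⟩ := hst1 W hWY
  have hWperp : perp W = W := gen_perp hWiso hWrk
  -- a (t-2)-dimensional subspace of W
  obtain ⟨S', hS'W, hS'rk⟩ := exists_submodule_finrank (t - 2) W (by rw [hWrk]; omega)
  have hS'iso := iso_of_le hS'W hWiso
  have hWleP : W ≤ perp S' := fun w hw y hy => iso_pair hWiso (hS'W hy) hw
  -- an isotropic vector s₀ ⟂ S' outside W
  obtain ⟨s₀, hs₀P, hQs₀, hs₀W⟩ :
      ∃ s₀, s₀ ∈ perp S' ∧ hypQ' F n s₀ = 0 ∧ s₀ ∉ W := by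
    have hPrk : finrank F (perp S') = 2 * n - (t - 2) := by rw [finrank_perp, hS'rk]
    have hnle : ¬ perp S' ≤ W := by
      intro hle
      have := Submodule.finrank_mono hle
      rw [hPrk, hWrk] at this
      omega
    obtain ⟨x, hxP, hxW⟩ := SetLike.not_le_iff_exists.mp hnle
    by_cases hQx : hypQ' F n x = 0
    · exact ⟨x, hxP, hQx, hxW⟩
    · have hex : ∃ w ∈ W, hypB F n x w ≠ 0 := by
        by_contra hcon
        push_neg at hcon
        apply hxW
        rw [← hWperp]
        intro y hy
        rw [hypB_symm]
        exact hcon y hy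
      obtain ⟨w, hwW, hBxw⟩ := hex
      refine ⟨x + (-(hypQ' F n x) / hypB F n x w) • w,
        Submodule.add_mem _ hxP (Submodule.smul_mem _ _ (hWleP hwW)), ?_, ?_⟩
      · have hQw : hypQ' F n w = 0 := by
          have := hWiso w hwW; rwa [hypQ_eq'] at this
        rw [hypQ_add, hypQ_smul, hQw, map_smul, smul_eq_mul]
        field_simp
        ring
      · intro hmem
        apply hxW
        have hxx : x = (x + (-(hypQ' F n x) / hypB F n x w) • w)
            - (-(hypQ' F n x) / hypB F n x w) • w := by module
        rw [hxx]
        exact Submodule.sub_mem _ hmem (Submodule.smul_mem _ _ hwW)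
  have hs₀S' : s₀ ∉ S' := fun h => hs₀W (hS'W h)
  -- the isotropic (t-1)-space S
  set S := S' ⊔ Submodule.span F {s₀} with hSdef
  have hSiso : HypIsotropic F n S :=
    iso_sup_span hS'iso (by rw [hypQ_eq']; exact hQs₀) hs₀P
  have hSrk : finrank F S = t - 1 := by
    rw [hSdef, finrank_sup_span hs₀S', hS'rk]; omega
  have hs₀S : s₀ ∈ S :=
    Submodule.mem_sup_right (Submodule.mem_span_singleton_self s₀)
  have hS'S : S' ≤ S := le_sup_left
  have hperpS : perp S = perp S' ⊓ perp (Submodule.span F {s₀}) := by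
    rw [hSdef, perp_sup]
  -- the member function g
  haveI hfin : Finite (Submodule F (Fin (2 * n) → F)) :=
    Finite.of_injective (fun M => (M : Set (Fin (2 * n) → F))) SetLike.coe_injective
  haveI : Fintype (Submodule F (Fin (2 * n) → F)) := Fintype.ofFinite _
  set g : (Fin (2 * n) → F) → Submodule F (Fin (2 * n) → F) :=
    fun x => Classical.epsilon (fun M => M ∈ Y ∧ S ⊔ Submodule.span F {x} ≤ M) with hgdef
  have hkey : ∀ x : Fin (2 * n) → F, hypQ' F n x = 0 → x ∈ perp S → x ∉ S →
      (g x ∈ Y ∧ S ⊔ Submodule.span F {x} ≤ g x) ∧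
        ∀ M ∈ Y, S ⊔ Submodule.span F {x} ≤ M → M = g x := by
    intro x hQx hxP hxS
    have hTiso : HypIsotropic F n (S ⊔ Submodule.span F {x}) :=
      iso_sup_span hSiso (by rw [hypQ_eq']; exact hQx) hxP
    have hTrk : finrank F (S ⊔ Submodule.span F {x} : Submodule F _) = t := by
      rw [finrank_sup_span hxS, hSrk]; omega
    obtain ⟨M0, hM0, huniq⟩ := hst2 _ hTiso hTrk
    have hg : g x ∈ Y ∧ S ⊔ Submodule.span F {x} ≤ g x := by
      rw [hgdef]
      exact Classical.epsilon_spec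
        (p := fun M => M ∈ Y ∧ S ⊔ Submodule.span F {x} ≤ M) ⟨M0, hM0⟩
    exact ⟨hg, fun M hM hle => (huniq M ⟨hM, hle⟩).trans (huniq (g x) hg).symm⟩
  -- members through S
  set YS : Finset (Submodule F (Fin (2 * n) → F)) :=
    Finset.univ.filter (fun M => M ∈ Y ∧ S ≤ M) with hYS
  set N := YS.card with hN
  set D0 := q ^ n - q ^ (t - 1) with hD0
  have hD0add : D0 + q ^ (t - 1) = q ^ n := by
    rw [hD0, Nat.sub_add_cancel (Nat.pow_le_pow_right (by omega) (by omega))]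
  -- upper count
  set DX : Finset (Fin (2 * n) → F) :=
    Finset.univ.filter (fun x => (x ∈ perp S ∧ hypQ' F n x = 0) ∧ x ∉ S) with hDX
  have hmapDX : ∀ x ∈ DX, g x ∈ YS := by
    intro x hx
    simp only [hDX, Finset.mem_filter, Finset.mem_univ, true_and] at hx
    obtain ⟨⟨hxP, hxQ⟩, hxS⟩ := hx
    obtain ⟨⟨hgY, hgle⟩, -⟩ := hkey x hxQ hxP hxS
    simp only [hYS, Finset.mem_filter, Finset.mem_univ, true_and]
    exact ⟨hgY, le_trans le_sup_left hgle⟩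
  have hfibDX : ∀ M ∈ YS, DX.filter (fun x => g x = M)
      = Finset.univ.filter (fun x => x ∈ M ∧ x ∉ S) := by
    intro M hM
    simp only [hYS, Finset.mem_filter, Finset.mem_univ, true_and] at hM
    obtain ⟨hMY, hSM⟩ := hM
    obtain ⟨hMiso, hMrk⟩ := hst1 M hMY
    ext x
    simp only [hDX, Finset.mem_filter, Finset.mem_univ, true_and, Finset.filter_filter]
    constructor
    · rintro ⟨⟨⟨hxP, hxQ⟩, hxS⟩, hgx⟩
      refine ⟨?_, hxS⟩
      rw [← hgx]
      exact (hkey x hxQ hxP hxS).1.2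
        (Submodule.mem_sup_right (Submodule.mem_span_singleton_self x))
    · rintro ⟨hxM, hxS⟩
      have hxQ : hypQ' F n x = 0 := by
        have := hMiso x hxM; rwa [hypQ_eq'] at this
      have hxP : x ∈ perp S := fun y hy => iso_pair hMiso (hSM hy) hxM
      refine ⟨⟨⟨hxP, hxQ⟩, hxS⟩, ?_⟩
      exact ((hkey x hxQ hxP hxS).2 M hMY
        (sup_le hSM (by rwa [Submodule.span_singleton_le_iff_mem]))).symm
  have hfibcard : ∀ M ∈ YS, (DX.filter (fun x => g x = M)).card = D0 := by
    intro M hM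
    rw [hfibDX M hM]
    simp only [hYS, Finset.mem_filter, Finset.mem_univ, true_and] at hM
    obtain ⟨hMY, hSM⟩ := hM
    obtain ⟨hMiso, hMrk⟩ := hst1 M hMY
    have hcf := card_filter_sub (F := F) hSM
    rw [natcard_submodule, natcard_submodule, hMrk, hSrk, ← hqdef] at hcf
    linarith only [hcf, hD0add]
  have hDXcard : DX.card = N * D0 := by
    rw [Finset.card_eq_sum_card_fiberwise hmapDX,
      Finset.sum_congr rfl hfibcard, Finset.sum_const, smul_eq_mul, hN]
  have hZSsplit : DX.card + q ^ (t - 1)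
      = Nat.card {x : Fin (2 * n) → F // x ∈ perp S ∧ hypQ' F n x = 0} := by
    set ZS : Finset (Fin (2 * n) → F) :=
      Finset.univ.filter (fun x => x ∈ perp S ∧ hypQ' F n x = 0) with hZS
    have h1 : (ZS.filter (fun x => x ∉ S)).card
        + (ZS.filter (fun x => ¬ x ∉ S)).card = ZS.card :=
      Finset.card_filter_add_card_filter_not _
    have h2 : ZS.filter (fun x => x ∉ S) = DX := by
      ext x
      simp only [hZS, hDX, Finset.filter_filter, Finset.mem_filter, Finset.mem_univ, true_and]
    have h3 : ZS.filter (fun x => ¬ x ∉ S) = Finset.univ.filter (fun x => x ∈ S) := by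
      ext x
      simp only [hZS, Finset.filter_filter, Finset.mem_filter, Finset.mem_univ,
        true_and, not_not]
      constructor
      · rintro ⟨-, hxS⟩; exact hxS
      · intro hxS
        refine ⟨⟨iso_le_perp hSiso hxS, ?_⟩, hxS⟩
        have := hSiso x hxS; rwa [hypQ_eq'] at this
    have h4 : (Finset.univ.filter (fun x : Fin (2 * n) → F => x ∈ S)).card
        = q ^ (t - 1) := by
      rw [card_filter_mem, natcard_submodule, hSrk, ← hqdef]
    have h5 : ZS.card
        = Nat.card {x : Fin (2 * n) → F // x ∈ perp S ∧ hypQ' F n x = 0} := by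
      rw [Nat.card_eq_fintype_card, Fintype.card_subtype]
    rw [← h5, ← h2, ← h4, ← h3]
    exact h1
  have hZval := zcount hn1 (t - 1) S hSiso hSrk
  have hexp0 : 2 * n - 1 - (t - 1) = 2 * n - t := by omega
  rw [hexp0, ← hqdef] at hZval
  -- N = q^(n-t) + 1
  have hNval : N = q ^ (n - t) + 1 := by
    have hD0pos : 0 < D0 := by
      have := Nat.pow_lt_pow_right (a := q) (by omega) (show t - 1 < n by omega)
      omega
    have he1 : q ^ (n - t) * q ^ (t - 1) = q ^ (n - 1) := by
      have h : n - t + (t - 1) = n - 1 := by omega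
      rw [← pow_add, h]
    have he2 : q ^ (n - t) * q ^ n = q ^ (2 * n - t) := by
      have h : n - t + n = 2 * n - t := by omega
      rw [← pow_add, h]
    have hqq1 : q ^ (n - t) * D0 + q ^ (n - 1) = q ^ (2 * n - t) := by
      calc q ^ (n - t) * D0 + q ^ (n - 1)
          = q ^ (n - t) * D0 + q ^ (n - t) * q ^ (t - 1) := by rw [he1]
        _ = q ^ (n - t) * (D0 + q ^ (t - 1)) := by ring
        _ = q ^ (n - t) * q ^ n := by rw [hD0add]
        _ = q ^ (2 * n - t) := he2
    have hrhs : (q ^ (n - t) + 1) * D0 + q ^ (t - 1) + q ^ (n - 1)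
        = q ^ (2 * n - t) + q ^ n := by
      have hmul : (q ^ (n - t) + 1) * D0 = q ^ (n - t) * D0 + D0 := by ring
      linarith only [hmul, hqq1, hD0add]
    have hlhs : N * D0 + q ^ (t - 1) + q ^ (n - 1) = q ^ (2 * n - t) + q ^ n := by
      linarith only [hDXcard, hZSsplit, hZval]
    have hNeq : N * D0 = (q ^ (n - t) + 1) * D0 := by
      linarith only [hlhs, hrhs]
    exact Nat.eq_of_mul_eq_mul_right hD0pos hNeq
  -- lower bound through W
  set X0 := perp (Submodule.span F {s₀}) with hX0
  have hs₀ne : s₀ ≠ 0 := fun h => hs₀W (h ▸ W.zero_mem)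
  have hX0rk : finrank F X0 = 2 * n - 1 := by
    rw [hX0, finrank_perp, finrank_span_singleton hs₀ne]
  have hWX0 : ¬ W ≤ X0 := by
    intro hle
    apply hs₀W
    rw [← hWperp]
    intro y hy
    rw [hypB_symm]
    exact mem_perp_span.mp (hle hy)
  have hsup : W ⊔ X0 = ⊤ := by
    have hlt : X0 < W ⊔ X0 := by
      rcases SetLike.not_le_iff_exists.mp hWX0 with ⟨w, hwW, hwX⟩
      refine lt_of_le_of_ne le_sup_right (fun h => hwX ?_)
      rw [h]
      exact Submodule.mem_sup_left hwW
    have h1 := Submodule.finrank_lt_finrank_of_lt hlt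
    rw [hX0rk] at h1
    have h2 : finrank F (W ⊔ X0 : Submodule F _) ≤ 2 * n := by
      have := Submodule.finrank_le (W ⊔ X0 : Submodule F (Fin (2 * n) → F))
      rwa [Module.finrank_fin_fun] at this
    apply Submodule.eq_top_of_finrank_eq
    rw [Module.finrank_fin_fun]
    omega
  have hKrk : finrank F (W ⊓ X0 : Submodule F _) = n - 1 := by
    have := Submodule.finrank_sup_add_finrank_inf_eq W X0
    rw [hsup, finrank_top, Module.finrank_fin_fun, hWrk, hX0rk] at this
    omega
  have hS'K : S' ≤ W ⊓ X0 := by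
    refine le_inf hS'W ?_
    intro y hy
    rw [hX0]
    apply mem_perp_span.mpr
    rw [hypB_symm]
    exact hs₀P y hy
  set DK : Finset (Fin (2 * n) → F) :=
    Finset.univ.filter (fun x => x ∈ (W ⊓ X0 : Submodule F _) ∧ x ∉ S') with hDK
  have hDKcard : DK.card + q ^ (t - 2) = q ^ (n - 1) := by
    have hcf := card_filter_sub (F := F) hS'K
    rw [natcard_submodule, natcard_submodule, hKrk, hS'rk, ← hqdef] at hcf
    exact hcf
  have hDKprops : ∀ x ∈ DK, hypQ' F n x = 0 ∧ x ∈ perp S ∧ x ∉ S ∧ x ∈ W := by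
    intro x hx
    simp only [hDK, Finset.mem_filter, Finset.mem_univ, true_and] at hx
    obtain ⟨hxK, hxS'⟩ := hx
    obtain ⟨hxW', hxX0⟩ := Submodule.mem_inf.mp hxK
    have hxQ : hypQ' F n x = 0 := by
      have := hWiso x hxW'; rwa [hypQ_eq'] at this
    have hxP : x ∈ perp S := by
      rw [hperpS]
      exact ⟨fun y hy => iso_pair hWiso (hS'W hy) hxW', hxX0⟩
    have hxS : x ∉ S := by
      intro hxS
      rw [hSdef] at hxS
      rcases Submodule.mem_sup.mp hxS with ⟨a, ha, b, hb, hab⟩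
      rcases Submodule.mem_span_singleton.mp hb with ⟨c, rfl⟩
      rcases eq_or_ne c 0 with rfl | hc
      · apply hxS'
        rw [← hab]
        simpa using ha
      · apply hs₀W
        have hcs : c • s₀ = x - a := by rw [← hab]; module
        have : c • s₀ ∈ W := hcs ▸ Submodule.sub_mem _ hxW' (hS'W ha)
        simpa [smul_smul, inv_mul_cancel₀ hc] using W.smul_mem c⁻¹ this
    exact ⟨hxQ, hxP, hxS, hxW'⟩
  have hmapDK : ∀ x ∈ DK, g x ∈ YS := by
    intro x hx
    obtain ⟨hxQ, hxP, hxS, -⟩ := hDKprops x hx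
    obtain ⟨⟨hgY, hgle⟩, -⟩ := hkey x hxQ hxP hxS
    simp only [hYS, Finset.mem_filter, Finset.mem_univ, true_and]
    exact ⟨hgY, le_trans le_sup_left hgle⟩
  have hfibDK : ∀ M ∈ YS, (DK.filter (fun x => g x = M)).card + q ^ (t - 2) ≤ q ^ (t - 1) := by
    intro M hM
    simp only [hYS, Finset.mem_filter, Finset.mem_univ, true_and] at hM
    obtain ⟨hMY, hSM⟩ := hM
    have hMWrk : finrank F (M ⊓ W : Submodule F _) ≤ t - 1 := by
      by_contra hcon
      push_neg at hcon
      obtain ⟨T', hT'le, hT'rk⟩ := exists_submodule_finrank t (M ⊓ W) (by omega)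
      have hT'iso : HypIsotropic F n T' := iso_of_le (le_trans hT'le inf_le_right) hWiso
      obtain ⟨M0, hM0, huniq⟩ := hst2 T' hT'iso hT'rk
      have hMW : M = W := (huniq M ⟨hMY, le_trans hT'le inf_le_left⟩).trans
        (huniq W ⟨hWY, le_trans hT'le inf_le_right⟩).symm
      exact hs₀W (hMW ▸ hSM hs₀S)
    have hS'MW : S' ≤ M ⊓ W := le_inf (le_trans hS'S hSM) hS'W
    have hsub : DK.filter (fun x => g x = M)
        ⊆ Finset.univ.filter (fun x => x ∈ (M ⊓ W : Submodule F _) ∧ x ∉ S') := by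
      intro x hx
      have hx' := Finset.mem_of_mem_filter x hx
      obtain ⟨hxQ, hxP, hxS, hxW'⟩ := hDKprops x hx'
      have hgx : g x = M := (Finset.mem_filter.mp hx).2
      have hxS'' : x ∉ S' := by
        simp only [hDK, Finset.mem_filter, Finset.mem_univ, true_and] at hx'
        exact hx'.2
      simp only [Finset.mem_filter, Finset.mem_univ, true_and]
      refine ⟨Submodule.mem_inf.mpr ⟨?_, hxW'⟩, hxS''⟩
      rw [← hgx]
      exact (hkey x hxQ hxP hxS).1.2
        (Submodule.mem_sup_right (Submodule.mem_span_singleton_self x))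
    have hcf := card_filter_sub (F := F) hS'MW
    rw [natcard_submodule, natcard_submodule, hS'rk, ← hqdef] at hcf
    have hle1 : (DK.filter (fun x => g x = M)).card + q ^ (t - 2)
        ≤ q ^ finrank F (M ⊓ W : Submodule F _) := by
      rw [← hcf]
      exact add_le_add_left (Finset.card_le_card hsub) _
    exact le_trans hle1 (Nat.pow_le_pow_right (by omega) hMWrk)
  have hsumDK : DK.card + N * q ^ (t - 2) ≤ N * q ^ (t - 1) := by
    rw [Finset.card_eq_sum_card_fiberwise hmapDK]
    calc (∑ M ∈ YS, (DK.filter (fun x => g x = M)).card) + N * q ^ (t - 2)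
        = ∑ M ∈ YS, ((DK.filter (fun x => g x = M)).card + q ^ (t - 2)) := by
          rw [Finset.sum_add_distrib, Finset.sum_const, smul_eq_mul, hN]
      _ ≤ ∑ _M ∈ YS, q ^ (t - 1) := Finset.sum_le_sum hfibDK
      _ = N * q ^ (t - 1) := by rw [Finset.sum_const, smul_eq_mul, hN]
  -- final contradiction
  have he1 : N * q ^ (t - 1) = q ^ (n - 1) + q ^ (t - 1) := by
    rw [hNval, add_mul, one_mul, ← pow_add]
    have h : n - t + (t - 1) = n - 1 := by omega
    rw [h]
  have he2 : N * q ^ (t - 2) = q ^ (n - 2) + q ^ (t - 2) := by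
    rw [hNval, add_mul, one_mul, ← pow_add]
    have h : n - t + (t - 2) = n - 2 := by omega
    rw [h]
  have hfinal : q ^ (n - 2) ≤ q ^ (t - 1) := by
    linarith only [hsumDK, hDKcard, he1, he2]
  have := (Nat.pow_le_pow_iff_right hq2).mp hfinal
  omega

end Main

end StHyp

theorem steiner_hyperbolic_classification (q n t : ℕ) (hq : IsPrimePow q)
    (ht1 : 1 < t) (htn : t < n)
    (F : Type*) [Field F] [Fintype F] (hcard : Fintype.card F = q)
    (h : ∃ Y : Set (Submodule F (Fin (2 * n) → F)), HypSteiner F n t Y) :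
    t = n - 1 := by
  by_contra hne
  obtain ⟨Y, hst⟩ := h
  exact StHyp.not_steiner ht1 htn hne Y hst
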